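/- In the q-shuffle algebra V, for all k, ℓ ∈ ℕ the words G_{k+1} = (yx)^{k+1} and G_{ℓ+1} = (yx)^{ℓ+1} commute under ⋆, and similarly G̃_{k+1} = (xy)^{k+1} and G̃_{ℓ+1} = (xy)^{ℓ+1} commute under ⋆. Moreover [G̃_{k+1}, G_{ℓ+1}]_⋆ + [G_{k+1}, G̃_{ℓ+1}]_⋆ = 0. -/

import Mathlib

noncomputable section

/-- Words in the letters `x` (= `false`) and `y` (= `true`). -/
abbrev Wd := List Bool

/-- The underlying vector space of the free algebra `F⟨x,y⟩`,
with the words as a basis. -/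
abbrev V (F : Type*) [Field F] := Wd →₀ F

/-- The pairing `⟨u,v⟩` on letters: `2` if equal, `-2` if distinct. -/
def pr (a b : Bool) : ℤ := if a = b then 2 else -2

/-- `⟨u₁,b⟩ + ⟨u₂,b⟩ + ⋯ + ⟨u_r,b⟩` for a word `u` and a letter `b`. -/
def wsum (u : Wd) (b : Bool) : ℤ := (u.map fun a => pr a b).sum

variable {F : Type*} [Field F]

/-- Left multiplication by a letter, in the free (concatenation) algebra. -/
def lmul (a : Bool) (f : V F) : V F := Finsupp.mapDomain (fun w => a :: w) f

/-- The `q`-shuffle product of two words (as an element of `V F`), defined by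
Rosso's recursion
`u ⋆ v = u₁((u₂⋯u_r) ⋆ v) + q^{⟨u₁,v₁⟩+⋯+⟨u_r,v₁⟩} v₁(u ⋆ (v₂⋯v_s))`. -/
def sh (q : F) : Wd → Wd → V F
  | [], v => Finsupp.single v 1
  | u@(_ :: _), [] => Finsupp.single u 1
  | a :: u', b :: v' =>
      lmul a (sh q u' (b :: v')) +
        q ^ wsum (a :: u') b • lmul b (sh q (a :: u') v')
  termination_by u v => u.length + v.length
  decreasing_by all_goals (simp only [List.length_cons]; omega)

/-- The `q`-shuffle product on `V F`, extended bilinearly from words. -/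
def st (q : F) (f g : V F) : V F :=
  f.sum fun u cu => g.sum fun v cv => (cu * cv) • sh q u v

/-- The concatenation (free-algebra) product on `V F`. -/
def cm (f g : V F) : V F :=
  f.sum fun u cu => g.sum fun v cv => Finsupp.single (u ++ v) (cu * cv)

/-- Powers with respect to the concatenation product. -/
def cpow (f : V F) : ℕ → V F
  | 0 => Finsupp.single [] 1
  | n + 1 => cm f (cpow f n)

/-- The alternating word `W_{-k} = xyx⋯x` of length `2k+1`. -/
def altX : ℕ → Wd
  | 0 => [false]
  | k + 1 => false :: true :: altX k

/-- The alternating word `W_{k+1} = yxy⋯y` of length `2k+1`. -/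
def altY : ℕ → Wd
  | 0 => [true]
  | k + 1 => true :: false :: altY k

/-- The alternating word `G_k = (yx)^k`. -/
def gw : ℕ → Wd
  | 0 => []
  | k + 1 => true :: false :: gw k

/-- The alternating word `G̃_k = (xy)^k`. -/
def gtw : ℕ → Wd
  | 0 => []
  | k + 1 => false :: true :: gtw k

/-- `W_{-k}` as an element of `V F`. -/
def Wm (F : Type*) [Field F] (k : ℕ) : V F := Finsupp.single (altX k) 1

/-- `W_{k+1}` as an element of `V F`. -/
def Wp (F : Type*) [Field F] (k : ℕ) : V F := Finsupp.single (altY k) 1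

/-- `G_k` as an element of `V F`. -/
def Gn (F : Type*) [Field F] (k : ℕ) : V F := Finsupp.single (gw k) 1

/-- `G̃_k` as an element of `V F`. -/
def Gt (F : Type*) [Field F] (k : ℕ) : V F := Finsupp.single (gtw k) 1
namespace StmtAux
variable {F : Type*} [Field F]

/-! ### Basic lemmas about `sh`, `wsum`, `lmul` -/

lemma sh_nil_left (q : F) (v : Wd) : sh q [] v = Finsupp.single v 1 := by rw [sh]

lemma sh_cons_nil (q : F) (a : Bool) (u : Wd) : sh q (a :: u) [] = Finsupp.single (a :: u) 1 := by
  rw [sh]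

lemma sh_cons_cons (q : F) (a : Bool) (u : Wd) (b : Bool) (v : Wd) :
    sh q (a :: u) (b :: v) =
      lmul a (sh q u (b :: v)) + q ^ wsum (a :: u) b • lmul b (sh q (a :: u) v) := by rw [sh]

lemma wsum_nil (b : Bool) : wsum [] b = 0 := rfl

lemma wsum_cons (a : Bool) (u : Wd) (b : Bool) : wsum (a :: u) b = pr a b + wsum u b := by
  simp [wsum]

lemma wsum_gw (m : ℕ) (b : Bool) : wsum (gw m) b = 0 := by
  induction m with
  | zero => rfl
  | succ m ih => cases b <;> simp [gw, wsum_cons, ih, pr]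

lemma wsum_gtw (m : ℕ) (b : Bool) : wsum (gtw m) b = 0 := by
  induction m with
  | zero => rfl
  | succ m ih => cases b <;> simp [gtw, wsum_cons, ih, pr]

lemma lmul_single (a : Bool) (w : Wd) (c : F) :
    lmul a (Finsupp.single w c) = Finsupp.single (a :: w) c := Finsupp.mapDomain_single

lemma lmul_add (a : Bool) (f g : V F) : lmul a (f + g) = lmul a f + lmul a g :=
  Finsupp.mapDomain_add

lemma lmul_smul (a : Bool) (c : F) (f : V F) : lmul a (c • f) = c • lmul a f :=
  Finsupp.mapDomain_smul c f

/-! ### The flip automorphism -/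

def sg (f : V F) : V F := Finsupp.mapDomain (List.map not) f

lemma sg_single (w : Wd) (c : F) : sg (Finsupp.single w c) = Finsupp.single (w.map not) c :=
  Finsupp.mapDomain_single

lemma sg_add (f g : V F) : sg (f + g) = sg f + sg g := Finsupp.mapDomain_add

lemma sg_smul (c : F) (f : V F) : sg (c • f) = c • sg f := Finsupp.mapDomain_smul c f

lemma sg_lmul (a : Bool) (f : V F) : sg (lmul a f) = lmul (!a) (sg f) := by
  unfold sg lmul
  rw [← Finsupp.mapDomain_comp, ← Finsupp.mapDomain_comp]
  congr 1

lemma pr_not (a b : Bool) : pr (!a) (!b) = pr a b := by cases a <;> cases b <;> rfl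

lemma wsum_map_not (u : Wd) (b : Bool) : wsum (u.map not) (!b) = wsum u b := by
  induction u with
  | nil => rfl
  | cons a u ih => simp [wsum_cons, pr_not, ih]

lemma sg_sh (q : F) : ∀ (n : ℕ) (u v : Wd), u.length + v.length = n →
    sg (sh q u v) = sh q (u.map not) (v.map not) := by
  intro n
  induction n using Nat.strong_induction_on with
  | _ n ih =>
    intro u v h
    match u, v with
    | [], v => rw [sh_nil_left, sg_single, List.map_nil, sh_nil_left]
    | a :: u, [] => rw [sh_cons_nil, sg_single, List.map_nil, List.map_cons, sh_cons_nil]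
    | a :: u, b :: v =>
        rw [sh_cons_cons, sg_add, sg_smul, sg_lmul, sg_lmul,
          ih (u.length + (b :: v).length) (by simp at h ⊢; omega) u (b :: v) rfl,
          ih ((a :: u).length + v.length) (by simp at h ⊢; omega) (a :: u) v rfl,
          List.map_cons, List.map_cons, sh_cons_cons, ← List.map_cons (f := not) (a := b) (l := v),
          ← List.map_cons (f := not) (a := a) (l := u), wsum_map_not]

lemma map_not_gw (m : ℕ) : (gw m).map not = gtw m := by
  induction m with
  | zero => rfl
  | succ m ih => simp [gw, gtw, ih]

lemma map_not_gtw (m : ℕ) : (gtw m).map not = gw m := by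
  induction m with
  | zero => rfl
  | succ m ih => simp [gw, gtw, ih]

/-! ### `st` on singletons -/

lemma st_single (q : F) (u v : Wd) :
    st q (Finsupp.single u 1) (Finsupp.single v 1) = sh q u v := by
  unfold st
  rw [Finsupp.sum_single_index, Finsupp.sum_single_index] <;> simp

end StmtAux
namespace StmtAux
variable {F : Type*} [Field F]

/-! ### Pure case: words built from `gw` -/

def Aq (q : F) (k l : ℕ) : V F := sh q (gw k) (gw l)
def Bp (q : F) (k l : ℕ) : V F := sh q (false :: gw k) (gw l)
def Bq (q : F) (k l : ℕ) : V F := sh q (gw k) (false :: gw l)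
def Cc (q : F) (k l : ℕ) : V F := sh q (false :: gw k) (false :: gw l)
def Ss (q : F) (k l : ℕ) : V F := Bq q k l + q ^ (2 : ℤ) • Bp q k l

lemma Aq_zero_left (q : F) (l : ℕ) : Aq q 0 l = Finsupp.single (gw l) 1 := sh_nil_left q _

lemma Aq_zero_right (q : F) (k : ℕ) : Aq q k 0 = Finsupp.single (gw k) 1 := by
  cases k with
  | zero => exact sh_nil_left q _
  | succ k => exact sh_cons_nil q _ _

lemma Bp_rec (q : F) (k l : ℕ) :
    Bp q k (l + 1) = lmul false (Aq q k (l + 1)) + q ^ (-2 : ℤ) • lmul true (Cc q k l) := by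
  unfold Bp Aq Cc
  conv_lhs => rw [show gw (l + 1) = true :: false :: gw l from rfl, sh_cons_cons]
  norm_num [wsum_cons, wsum_gw, pr]
  rfl

lemma Bp_zero (q : F) (k : ℕ) : Bp q k 0 = lmul false (Aq q k 0) := by
  rw [Aq_zero_right, lmul_single]; exact sh_cons_nil q _ _

lemma Bq_rec (q : F) (k l : ℕ) :
    Bq q (k + 1) l = lmul true (Cc q k l) + lmul false (Aq q (k + 1) l) := by
  unfold Bq Aq Cc
  conv_lhs => rw [show gw (k + 1) = true :: false :: gw k from rfl, sh_cons_cons]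
  norm_num [wsum_cons, wsum_gw, pr]
  rfl

lemma Bq_zero (q : F) (l : ℕ) : Bq q 0 l = lmul false (Aq q 0 l) := by
  rw [Aq_zero_left, lmul_single]; exact sh_nil_left q _

lemma Cc_eq (q : F) (k l : ℕ) : Cc q k l = lmul false (Ss q k l) := by
  unfold Cc Ss Bp Bq
  conv_lhs => rw [sh_cons_cons]
  norm_num [wsum_cons, wsum_gw, pr, lmul_add, lmul_smul]

lemma Aq_rec (q : F) (k l : ℕ) :
    Aq q (k + 1) (l + 1) =
      lmul true (lmul false (Aq q k (l + 1) + Aq q (k + 1) l)) +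
        (1 + q ^ (-2 : ℤ)) • lmul true (lmul true (Cc q k l)) := by
  have h1 : Aq q (k + 1) (l + 1) = lmul true (Bp q k (l + 1)) + lmul true (Bq q (k + 1) l) := by
    unfold Aq Bp Bq
    conv_lhs => rw [show gw (k + 1) = true :: false :: gw k from rfl,
      show gw (l + 1) = true :: false :: gw l from rfl, sh_cons_cons]
    norm_num [wsum_cons, wsum_gw, pr]
    rfl
  rw [h1, Bp_rec, Bq_rec]
  simp only [lmul_add, lmul_smul]
  module

lemma Ss_rec (q : F) (hq : q ≠ 0) (k l : ℕ) :
    Ss q (k + 1) (l + 1) = lmul true (Cc q k (l + 1) + Cc q (k + 1) l) +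
      (1 + q ^ (2 : ℤ)) • lmul false (Aq q (k + 1) (l + 1)) := by
  have hz : q ^ (2 : ℤ) * q ^ (-2 : ℤ) = 1 := by
    rw [← zpow_add₀ hq]; norm_num
  unfold Ss
  rw [Bq_rec, Bp_rec]
  simp only [smul_add, lmul_add, lmul_smul, smul_smul, hz, one_smul]
  module

lemma Ss_zero_right (q : F) (k : ℕ) :
    Ss q (k + 1) 0 = lmul true (Cc q k 0) + (1 + q ^ (2 : ℤ)) • lmul false (Aq q (k + 1) 0) := by
  unfold Ss
  rw [Bq_rec, Bp_zero]
  module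

lemma Ss_zero_left (q : F) (hq : q ≠ 0) (l : ℕ) :
    Ss q 0 (l + 1) = lmul true (Cc q 0 l) + (1 + q ^ (2 : ℤ)) • lmul false (Aq q 0 (l + 1)) := by
  have hz : q ^ (2 : ℤ) * q ^ (-2 : ℤ) = 1 := by
    rw [← zpow_add₀ hq]; norm_num
  unfold Ss
  rw [Bq_zero, Bp_rec]
  simp only [smul_add, lmul_add, lmul_smul, smul_smul, hz, one_smul]
  module

lemma pure_sym (q : F) (hq : q ≠ 0) :
    ∀ n k l, k + l = n → Aq q k l = Aq q l k ∧ Ss q k l = Ss q l k := by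
  intro n
  induction n using Nat.strong_induction_on with
  | _ n ih =>
    intro k l hn
    have hA : ∀ k' l', k' + l' = n → Aq q k' l' = Aq q l' k' := by
      intro k' l' hn'
      match k', l' with
      | 0, l' => rw [Aq_zero_left, Aq_zero_right]
      | k' + 1, 0 => rw [Aq_zero_left, Aq_zero_right]
      | k' + 1, l' + 1 =>
          rw [Aq_rec, Aq_rec,
            (ih (k' + (l' + 1)) (by omega) k' (l' + 1) rfl).1,
            (ih ((k' + 1) + l') (by omega) (k' + 1) l' rfl).1,
            Cc_eq, Cc_eq, (ih (k' + l') (by omega) k' l' rfl).2,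
            add_comm (Aq q (l' + 1) k') (Aq q l' (k' + 1))]
    refine ⟨hA k l hn, ?_⟩
    match k, l with
    | 0, 0 => rfl
    | k + 1, 0 =>
        rw [Ss_zero_right q, Ss_zero_left q hq, Cc_eq, Cc_eq,
          (ih (k + 0) (by omega) k 0 rfl).2, hA (k + 1) 0 hn]
    | 0, l + 1 =>
        rw [Ss_zero_right q, Ss_zero_left q hq, Cc_eq, Cc_eq,
          (ih (0 + l) (by omega) 0 l rfl).2, hA 0 (l + 1) hn]
    | k + 1, l + 1 =>
        rw [Ss_rec q hq, Ss_rec q hq,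
          Cc_eq q k (l + 1), Cc_eq q (k + 1) l, Cc_eq q l (k + 1), Cc_eq q (l + 1) k,
          (ih (k + (l + 1)) (by omega) k (l + 1) rfl).2,
          (ih ((k + 1) + l) (by omega) (k + 1) l rfl).2,
          hA (k + 1) (l + 1) hn,
          add_comm (lmul false (Ss q (l + 1) k)) (lmul false (Ss q l (k + 1)))]

end StmtAux
namespace StmtAux
variable {F : Type*} [Field F]

/-! ### Mixed case -/

def Mm (q : F) (k l : ℕ) : V F := sh q (gtw k) (gw l)
def Uu (q : F) (k l : ℕ) : V F := sh q (true :: gtw k) (gw l)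
def Vv (q : F) (k l : ℕ) : V F := sh q (gtw k) (false :: gw l)
def Ww (q : F) (k l : ℕ) : V F := sh q (true :: gtw k) (false :: gw l)
def Nn (q : F) (k l : ℕ) : V F := sh q (gw k) (gtw l)
def Up (q : F) (k l : ℕ) : V F := sh q (false :: gw k) (gtw l)
def Vp (q : F) (k l : ℕ) : V F := sh q (gw k) (true :: gtw l)
def Wq (q : F) (k l : ℕ) : V F := sh q (false :: gw k) (true :: gtw l)

def Ff (q : F) (k l : ℕ) : V F := Uu q k (l + 1) + Vp q (k + 1) l
def Kk (q : F) (k l : ℕ) : V F := Vv q k l + q ^ (-2 : ℤ) • Up q k l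
def Hh (q : F) (k l : ℕ) : V F :=
  Mm q k (l + 1) + Nn q (k + 1) l + q ^ (2 : ℤ) • Ww q k l + Wq q k l

def Fh (q : F) : ℕ → ℕ → V F
  | 0, 0 => 0
  | a + 1, 0 => Uu q a 0
  | 0, b + 1 => Vp q 0 b
  | a + 1, b + 1 => Ff q a b

/-! Structural recursions -/

lemma R1 (q : F) (k l : ℕ) :
    Mm q (k + 1) (l + 1) = lmul false (Uu q k (l + 1)) + lmul true (Vv q (k + 1) l) := by
  unfold Mm Uu Vv
  conv_lhs => rw [show gtw (k + 1) = false :: true :: gtw k from rfl,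
    show gw (l + 1) = true :: false :: gw l from rfl, sh_cons_cons]
  norm_num [wsum_cons, wsum_gtw, pr]
  rfl

lemma R2 (q : F) (k l : ℕ) :
    Uu q k (l + 1) = lmul true (Mm q k (l + 1)) + q ^ (2 : ℤ) • lmul true (Ww q k l) := by
  unfold Uu Mm Ww
  conv_lhs => rw [show gw (l + 1) = true :: false :: gw l from rfl, sh_cons_cons]
  norm_num [wsum_cons, wsum_gtw, pr]
  rfl

lemma R3 (q : F) (k l : ℕ) :
    Vv q (k + 1) l = lmul false (Ww q k l) + lmul false (Mm q (k + 1) l) := by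
  unfold Vv Ww Mm
  conv_lhs => rw [show gtw (k + 1) = false :: true :: gtw k from rfl, sh_cons_cons]
  norm_num [wsum_cons, wsum_gtw, pr]
  rfl

lemma R4 (q : F) (k l : ℕ) :
    Ww q k l = lmul true (Vv q k l) + q ^ (-2 : ℤ) • lmul false (Uu q k l) := by
  unfold Ww Vv Uu
  conv_lhs => rw [sh_cons_cons]
  norm_num [wsum_cons, wsum_gtw, pr]

lemma R1' (q : F) (k l : ℕ) :
    Nn q (k + 1) (l + 1) = lmul true (Up q k (l + 1)) + lmul false (Vp q (k + 1) l) := by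
  unfold Nn Up Vp
  conv_lhs => rw [show gw (k + 1) = true :: false :: gw k from rfl,
    show gtw (l + 1) = false :: true :: gtw l from rfl, sh_cons_cons]
  norm_num [wsum_cons, wsum_gw, pr]
  rfl

lemma R2' (q : F) (k l : ℕ) :
    Up q k (l + 1) = lmul false (Nn q k (l + 1)) + q ^ (2 : ℤ) • lmul false (Wq q k l) := by
  unfold Up Nn Wq
  conv_lhs => rw [show gtw (l + 1) = false :: true :: gtw l from rfl, sh_cons_cons]
  norm_num [wsum_cons, wsum_gw, pr]
  rfl

lemma R3' (q : F) (k l : ℕ) :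
    Vp q (k + 1) l = lmul true (Wq q k l) + lmul true (Nn q (k + 1) l) := by
  unfold Vp Wq Nn
  conv_lhs => rw [show gw (k + 1) = true :: false :: gw k from rfl, sh_cons_cons]
  norm_num [wsum_cons, wsum_gw, pr]
  rfl

lemma R4' (q : F) (k l : ℕ) :
    Wq q k l = lmul false (Vp q k l) + q ^ (-2 : ℤ) • lmul true (Up q k l) := by
  unfold Wq Vp Up
  conv_lhs => rw [sh_cons_cons]
  norm_num [wsum_cons, wsum_gw, pr]

/-! Boundary values -/

lemma Mm_zero_left (q : F) (l : ℕ) : Mm q 0 l = Finsupp.single (gw l) 1 := sh_nil_left q _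
lemma Mm_zero_right (q : F) (k : ℕ) : Mm q k 0 = Finsupp.single (gtw k) 1 := by
  cases k with
  | zero => exact sh_nil_left q _
  | succ k => exact sh_cons_nil q _ _
lemma Nn_zero_left (q : F) (l : ℕ) : Nn q 0 l = Finsupp.single (gtw l) 1 := sh_nil_left q _
lemma Nn_zero_right (q : F) (k : ℕ) : Nn q k 0 = Finsupp.single (gw k) 1 := by
  cases k with
  | zero => exact sh_nil_left q _
  | succ k => exact sh_cons_nil q _ _
lemma Uu_zero (q : F) (k : ℕ) : Uu q k 0 = Finsupp.single (true :: gtw k) 1 := sh_cons_nil q _ _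
lemma Vv_zero (q : F) (l : ℕ) : Vv q 0 l = Finsupp.single (false :: gw l) 1 := sh_nil_left q _
lemma Up_zero (q : F) (k : ℕ) : Up q k 0 = Finsupp.single (false :: gw k) 1 := sh_cons_nil q _ _
lemma Vp_zero (q : F) (l : ℕ) : Vp q 0 l = Finsupp.single (true :: gtw l) 1 := sh_nil_left q _

lemma hMm0 (q : F) (l : ℕ) : Mm q 0 (l + 1) = lmul true (Vv q 0 l) := by
  rw [Mm_zero_left, Vv_zero, lmul_single]; rfl
lemma hMmr0 (q : F) (k : ℕ) : Mm q (k + 1) 0 = lmul false (Uu q k 0) := by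
  rw [Mm_zero_right, Uu_zero, lmul_single]; rfl
lemma hNn0 (q : F) (l : ℕ) : Nn q 0 (l + 1) = lmul false (Vp q 0 l) := by
  rw [Nn_zero_left, Vp_zero, lmul_single]; rfl
lemma hNnr0 (q : F) (k : ℕ) : Nn q (k + 1) 0 = lmul true (Up q k 0) := by
  rw [Nn_zero_right, Up_zero, lmul_single]; rfl
lemma hVv0 (q : F) (l : ℕ) : Vv q 0 l = lmul false (Mm q 0 l) := by
  rw [Mm_zero_left, Vv_zero, lmul_single]
lemma hUp0 (q : F) (k : ℕ) : Up q k 0 = lmul false (Nn q k 0) := by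
  rw [Nn_zero_right, Up_zero, lmul_single]
lemma hUuVp (q : F) (a : ℕ) : Uu q a 0 = Vp q 0 a := by rw [Uu_zero, Vp_zero]

/-! The key identities -/

lemma F_id (q : F) (k l : ℕ) : Ff q k l = lmul true (Hh q k l) := by
  unfold Ff Hh
  rw [R2, R3']
  simp only [lmul_add, lmul_smul]
  module

lemma H_id (q : F) (hq : q ≠ 0) (k l : ℕ) :
    Hh q k l = (1 + q ^ (2 : ℤ)) • lmul true (Kk q k l) +
      lmul false (Fh q k (l + 1) + Fh q (k + 1) l) := by
  have hz : q ^ (2 : ℤ) * q ^ (-2 : ℤ) = 1 := by rw [← zpow_add₀ hq]; norm_num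
  have hz' : q ^ (-2 : ℤ) * q ^ (2 : ℤ) = 1 := by rw [← zpow_add₀ hq]; norm_num
  match k, l with
  | 0, 0 =>
      unfold Hh Kk Fh
      rw [hMm0, hNnr0, R4, R4']
      simp only [smul_add, lmul_add, lmul_smul, smul_smul, hz, hz', one_smul]
      match_scalars <;>
        first
          | ring1
          | linear_combination hz'
          | linear_combination (-1 : F) * hz'
          | linear_combination q ^ (-2:ℤ) * hz'
          | linear_combination (-(q ^ (-2:ℤ))) * hz'
          | linear_combination q ^ (2:ℤ) * hz'
          | linear_combination (-(q ^ (2:ℤ))) * hz'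
  | a + 1, 0 =>
      unfold Hh Kk Fh Ff
      rw [R1 q a 0, hNnr0, R4, R4']
      simp only [smul_add, lmul_add, lmul_smul, smul_smul, hz, hz', one_smul]
      match_scalars <;>
        first
          | ring1
          | linear_combination hz'
          | linear_combination (-1 : F) * hz'
          | linear_combination q ^ (-2:ℤ) * hz'
          | linear_combination (-(q ^ (-2:ℤ))) * hz'
          | linear_combination q ^ (2:ℤ) * hz'
          | linear_combination (-(q ^ (2:ℤ))) * hz'
  | 0, b + 1 =>
      unfold Hh Kk Fh Ff
      rw [hMm0, R1' q 0 b, R4, R4']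
      simp only [smul_add, lmul_add, lmul_smul, smul_smul, hz, hz', one_smul]
      match_scalars <;>
        first
          | ring1
          | linear_combination hz'
          | linear_combination (-1 : F) * hz'
          | linear_combination q ^ (-2:ℤ) * hz'
          | linear_combination (-(q ^ (-2:ℤ))) * hz'
          | linear_combination q ^ (2:ℤ) * hz'
          | linear_combination (-(q ^ (2:ℤ))) * hz'
  | a + 1, b + 1 =>
      unfold Hh Kk Fh Ff
      rw [R1 q a (b + 1), R1' q (a + 1) b, R4, R4']
      simp only [smul_add, lmul_add, lmul_smul, smul_smul, hz, hz', one_smul]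
      match_scalars <;>
        first
          | ring1
          | linear_combination hz'
          | linear_combination (-1 : F) * hz'
          | linear_combination q ^ (-2:ℤ) * hz'
          | linear_combination (-(q ^ (-2:ℤ))) * hz'
          | linear_combination q ^ (2:ℤ) * hz'
          | linear_combination (-(q ^ (2:ℤ))) * hz'

lemma K_id (q : F) (hq : q ≠ 0) (a b : ℕ) :
    Kk q (a + 1) (b + 1) = lmul false (lmul true (Kk q a (b + 1) + Kk q (a + 1) b) +
      (1 + q ^ (-2 : ℤ)) • lmul false (Ff q a b)) := by
  have hz : q ^ (2 : ℤ) * q ^ (-2 : ℤ) = 1 := by rw [← zpow_add₀ hq]; norm_num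
  have hz' : q ^ (-2 : ℤ) * q ^ (2 : ℤ) = 1 := by rw [← zpow_add₀ hq]; norm_num
  unfold Kk Ff
  rw [R3 q a (b + 1), R2' q (a + 1) b, R4 q a (b + 1), R1 q a b, R1' q a b, R4' q (a + 1) b]
  simp only [smul_add, lmul_add, lmul_smul, smul_smul, hz, hz', one_smul]
  module

lemma K_id_r0 (q : F) (hq : q ≠ 0) (a : ℕ) :
    Kk q (a + 1) 0 = lmul false (lmul true (Kk q a 0) +
      (1 + q ^ (-2 : ℤ)) • lmul false (Uu q a 0)) := by
  unfold Kk
  rw [R3 q a 0, hMmr0, hUp0, hNnr0, R4 q a 0]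
  simp only [smul_add, lmul_add, lmul_smul, smul_smul, one_smul]
  module

lemma K_id_0l (q : F) (hq : q ≠ 0) (b : ℕ) :
    Kk q 0 (b + 1) = lmul false (lmul true (Kk q 0 b) +
      (1 + q ^ (-2 : ℤ)) • lmul false (Vp q 0 b)) := by
  have hz' : q ^ (-2 : ℤ) * q ^ (2 : ℤ) = 1 := by rw [← zpow_add₀ hq]; norm_num
  unfold Kk
  rw [hVv0, hMm0, R2' q 0 b, hNn0, R4' q 0 b]
  simp only [smul_add, lmul_add, lmul_smul, smul_smul, hz', one_smul]
  match_scalars <;>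
        first
          | ring1
          | linear_combination hz'
          | linear_combination (-1 : F) * hz'
          | linear_combination q ^ (-2:ℤ) * hz'
          | linear_combination (-(q ^ (-2:ℤ))) * hz'
          | linear_combination q ^ (2:ℤ) * hz'
          | linear_combination (-(q ^ (2:ℤ))) * hz'

/-! The mixed symmetry -/

lemma mixed_sym (q : F) (hq : q ≠ 0) :
    ∀ n k l, k + l = n → Kk q k l = Kk q l k ∧ Ff q k l = Ff q l k := by
  intro n
  induction n using Nat.strong_induction_on with
  | _ n ih =>
    intro k l hn
    have hFh : ∀ a b, a + b ≤ n + 1 → Fh q a b = Fh q b a := by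
      intro a b hab
      match a, b with
      | 0, 0 => rfl
      | a + 1, 0 => show Uu q a 0 = Vp q 0 a; exact hUuVp q a
      | 0, b + 1 => show Vp q 0 b = Uu q b 0; exact (hUuVp q b).symm
      | a + 1, b + 1 =>
          show Ff q a b = Ff q b a
          exact (ih (a + b) (by omega) a b rfl).2
    have hK : ∀ k' l', k' + l' = n → Kk q k' l' = Kk q l' k' := by
      intro k' l' hn'
      match k', l' with
      | 0, 0 => rfl
      | a + 1, 0 =>
          rw [K_id_r0 q hq, K_id_0l q hq, (ih a (by omega) a 0 rfl).1, hUuVp]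
      | 0, a + 1 =>
          rw [K_id_r0 q hq, K_id_0l q hq, (ih a (by omega) a 0 rfl).1, hUuVp]
      | a + 1, b + 1 =>
          rw [K_id q hq, K_id q hq,
            (ih (a + (b + 1)) (by omega) a (b + 1) rfl).1,
            (ih ((a + 1) + b) (by omega) (a + 1) b rfl).1,
            (ih (a + b) (by omega) a b rfl).2,
            add_comm (Kk q (b + 1) a) (Kk q b (a + 1))]
    refine ⟨hK k l hn, ?_⟩
    rw [F_id, F_id, H_id q hq, H_id q hq, hK k l hn,
      hFh k (l + 1) (by omega), hFh (k + 1) l (by omega),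
      add_comm (Fh q (l + 1) k) (Fh q l (k + 1))]

/-! Assembly of the mixed commutator -/

lemma sgFf (q : F) (k l : ℕ) :
    sg (Ff q k l) = Up q k (l + 1) + Vv q (k + 1) l := by
  unfold Ff Uu Vp Up Vv
  rw [sg_add, sg_sh q _ _ _ rfl, sg_sh q _ _ _ rfl, List.map_cons, List.map_cons,
    map_not_gw, map_not_gtw, map_not_gw, map_not_gtw]
  rfl

lemma T_eq (q : F) (k l : ℕ) :
    Mm q (k + 1) (l + 1) + Nn q (k + 1) (l + 1) =
      lmul false (Ff q k l) + lmul true (sg (Ff q k l)) := by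
  rw [R1, R1', sgFf]
  unfold Ff
  simp only [lmul_add]
  abel

lemma T_sym (q : F) (hq : q ≠ 0) (k l : ℕ) :
    Mm q (k + 1) (l + 1) + Nn q (k + 1) (l + 1) =
      Mm q (l + 1) (k + 1) + Nn q (l + 1) (k + 1) := by
  rw [T_eq, T_eq, (mixed_sym q hq (k + l) k l rfl).2]

end StmtAux

/-- `[G_{k+1}, G_{ℓ+1}] = 0`, `[G̃_{k+1}, G̃_{ℓ+1}] = 0`, and
`[G̃_{k+1}, G_{ℓ+1}] + [G_{k+1}, G̃_{ℓ+1}] = 0`. -/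
theorem stmt_6 {F : Type*} [Field F] (q : F) (hq : q ≠ 0)
    (hq' : ∀ n : ℕ, 0 < n → q ^ n ≠ 1) (k l : ℕ) :
    st q (Gn F (k + 1)) (Gn F (l + 1)) = st q (Gn F (l + 1)) (Gn F (k + 1)) ∧
    st q (Gt F (k + 1)) (Gt F (l + 1)) = st q (Gt F (l + 1)) (Gt F (k + 1)) ∧
    (st q (Gt F (k + 1)) (Gn F (l + 1)) - st q (Gn F (l + 1)) (Gt F (k + 1)))
      + (st q (Gn F (k + 1)) (Gt F (l + 1)) - st q (Gt F (l + 1)) (Gn F (k + 1))) = 0 := by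
  have hA : ∀ a b : ℕ, sh q (gw a) (gw b) = sh q (gw b) (gw a) := fun a b =>
    (StmtAux.pure_sym q hq (a + b) a b rfl).1
  refine ⟨?_, ?_, ?_⟩
  · unfold Gn
    rw [StmtAux.st_single, StmtAux.st_single]
    exact hA (k + 1) (l + 1)
  · unfold Gt
    rw [StmtAux.st_single, StmtAux.st_single]
    have hgg : ∀ a b : ℕ, sh q (gtw a) (gtw b) = StmtAux.sg (sh q (gw a) (gw b)) := by
      intro a b
      rw [StmtAux.sg_sh q ((gw a).length + (gw b).length) (gw a) (gw b) rfl,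
        StmtAux.map_not_gw, StmtAux.map_not_gw]
    rw [hgg, hgg, hA (k + 1) (l + 1)]
  · unfold Gt Gn
    rw [StmtAux.st_single, StmtAux.st_single, StmtAux.st_single, StmtAux.st_single]
    have h : sh q (gtw (k + 1)) (gw (l + 1)) + sh q (gw (k + 1)) (gtw (l + 1)) =
        sh q (gtw (l + 1)) (gw (k + 1)) + sh q (gw (l + 1)) (gtw (k + 1)) :=
      StmtAux.T_sym q hq k l
    rw [sub_add_sub_comm, h]
    abel
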